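/- Let X be an infinite subset of Zar(F). Then the union over all cofinite subsets Y of X of the ideals J(Y) = ⋂_{V∈Y} 𝔪_V equals J(lim X) = ⋂_{U ∈ lim X} 𝔪_U, where lim X is the set of patch limit points of X. -/

import Mathlib

open Set

/-- A subring `V` of a field `F` is a valuation ring of `F` (with quotient field `F`). -/
def IsValSubring (F : Type*) [Field F] (V : Subring F) : Prop :=
  ∀ t : F, t ≠ 0 → t ∈ V ∨ t⁻¹ ∈ V

/-- The Zariski-Riemann space of the field `F`: the set of valuation rings of `F`. -/
def Zar (F : Type*) [Field F] : Type _ := {V : Subring F // IsValSubring F V}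

/-- The patch (constructible) topology on `Zar F`, generated by the sets
`{V : x ∈ V}` and `{V : y ∉ V}` for `x, y ∈ F`. -/
instance Zar.patchTopology (F : Type*) [Field F] : TopologicalSpace (Zar F) :=
  TopologicalSpace.generateFrom
    ({S | ∃ x : F, S = {V : Zar F | x ∈ V.1}} ∪ {S | ∃ y : F, S = {V : Zar F | y ∉ V.1}})

variable {F : Type*} [Field F]

/-- The maximal ideal of a valuation ring of `F`, as a subset of `F`. -/
def mIdeal (V : Zar F) : Set F := {x : F | x ∈ V.1 ∧ (x = 0 ∨ x⁻¹ ∉ V.1)}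

/-- `A(X)`: the intersection of the valuation rings in `X`, as a subset of `F`. -/
def aSet (X : Set (Zar F)) : Set F := ⋂ V ∈ X, ((V : Zar F).1 : Set F)

/-- `A(X)` as a subring of `F`. -/
def ASub (X : Set (Zar F)) : Subring F := ⨅ V ∈ X, (V : Zar F).1

/-- `J(X)`: the intersection of the maximal ideals of the valuation rings in `X`. -/
def jSet (X : Set (Zar F)) : Set F := ⋂ V ∈ X, mIdeal V

/-- The set of limit points of `X` in the patch topology of `Zar F`. -/
def limPts (X : Set (Zar F)) : Set (Zar F) :=
  {V : Zar F | ∀ U : Set (Zar F), IsOpen U → V ∈ U → ∃ W ∈ X, W ≠ V ∧ W ∈ U}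



lemma zar_isOpen_mem (x : F) : IsOpen {V : Zar F | x ∈ V.1} :=
  TopologicalSpace.GenerateOpen.basic _ (Or.inl ⟨x, rfl⟩)

lemma zar_isOpen_notMem (y : F) : IsOpen {V : Zar F | y ∉ V.1} :=
  TopologicalSpace.GenerateOpen.basic _ (Or.inr ⟨y, rfl⟩)

instance : T1Space (Zar F) := by
  constructor
  intro W
  rw [← isOpen_compl_iff]
  have : ({W} : Set (Zar F))ᶜ =
      (⋃ x ∈ {x : F | x ∉ W.1}, {V : Zar F | x ∈ V.1}) ∪
      (⋃ x ∈ {x : F | x ∈ W.1}, {V : Zar F | x ∉ V.1}) := by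
    ext V
    simp only [Set.mem_compl_iff, Set.mem_singleton_iff, Set.mem_union, Set.mem_iUnion,
      Set.mem_setOf_eq, exists_prop]
    constructor
    · intro hne
      by_contra h
      push_neg at h
      obtain ⟨h1, h2⟩ := h
      refine hne (Subtype.ext ?_)
      ext x
      constructor
      · intro hx
        by_contra hxW
        exact h1 x hxW hx
      · intro hx
        by_contra hxV
        exact hxV (h2 x hx)
    · rintro (⟨x, hxW, hxV⟩ | ⟨x, hxW, hxV⟩) rfl
      · exact hxW hxV
      · exact hxV hxW
  rw [this]
  exact (isOpen_biUnion fun x _ => zar_isOpen_mem x).union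
    (isOpen_biUnion fun x _ => zar_isOpen_notMem x)

/-- A limit point of `X` has every open neighborhood meeting any cofinite subset of `X`. -/
lemma limPts_meets {X Y : Set (Zar F)} (hYX : Y ⊆ X) (hfin : (X \ Y).Finite)
    {U : Zar F} (hU : U ∈ limPts X) {N : Set (Zar F)} (hN : IsOpen N) (hUN : U ∈ N) :
    ∃ W ∈ Y, W ∈ N := by
  set T : Set (Zar F) := (X \ Y) \ {U} with hT
  have hTfin : T.Finite := hfin.diff
  have hN' : IsOpen (N \ T) := hN.sdiff hTfin.isClosed
  have hUN' : U ∈ N \ T := ⟨hUN, fun h => h.2 rfl⟩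
  obtain ⟨W, hWX, hWU, hWN'⟩ := hU (N \ T) hN' hUN'
  refine ⟨W, ?_, hWN'.1⟩
  by_contra hWY
  exact hWN'.2 ⟨⟨hWX, hWY⟩, hWU⟩

/-- The valuation ring associated to an ultrafilter on `Zar F`. -/
def uRing (𝒰 : Ultrafilter (Zar F)) : Subring F where
  carrier := {x : F | {V : Zar F | x ∈ V.1} ∈ 𝒰}
  one_mem' := Filter.mem_of_superset Filter.univ_mem (fun V _ => one_mem V.1)
  mul_mem' := fun ha hb =>
    Filter.mem_of_superset (Filter.inter_mem ha hb)
      (fun V hV => show _ * _ ∈ V.1 from mul_mem hV.1 hV.2)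
  add_mem' := fun ha hb =>
    Filter.mem_of_superset (Filter.inter_mem ha hb)
      (fun V hV => show _ + _ ∈ V.1 from add_mem hV.1 hV.2)
  zero_mem' := Filter.mem_of_superset Filter.univ_mem (fun V _ => zero_mem V.1)
  neg_mem' := fun ha =>
    Filter.mem_of_superset ha (fun V hV => show -_ ∈ V.1 from neg_mem hV)

lemma uRing_mem (𝒰 : Ultrafilter (Zar F)) (x : F) :
    x ∈ uRing 𝒰 ↔ {V : Zar F | x ∈ V.1} ∈ 𝒰 := Iff.rfl

lemma uRing_isVal (𝒰 : Ultrafilter (Zar F)) : IsValSubring F (uRing 𝒰) := by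
  intro t ht
  rcases 𝒰.mem_or_compl_mem {V : Zar F | t ∈ V.1} with h | h
  · exact Or.inl ((uRing_mem 𝒰 t).2 h)
  · refine Or.inr ((uRing_mem 𝒰 t⁻¹).2 (Filter.mem_of_superset h ?_))
    intro V hV
    rcases V.2 t ht with h' | h'
    · exact absurd h' hV
    · exact h'

def uZar (𝒰 : Ultrafilter (Zar F)) : Zar F := ⟨uRing 𝒰, uRing_isVal 𝒰⟩

open Filter in
lemma uZar_limPts {Z : Set (Zar F)} (𝒰 : Ultrafilter (Zar F)) (h𝒰 : ↑𝒰 ≤ cofinite ⊓ 𝓟 Z) :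
    uZar 𝒰 ∈ limPts Z := by
  intro N hN hUN
  have hbasis := TopologicalSpace.isTopologicalBasis_of_subbasis
    (rfl : (Zar.patchTopology F) = TopologicalSpace.generateFrom _)
  obtain ⟨B, hBmem, hUB, hBN⟩ := hbasis.exists_subset_of_mem_open hUN hN
  obtain ⟨f, ⟨hffin, hfsub⟩, rfl⟩ := hBmem
  have hB𝒰 : ⋂₀ f ∈ 𝒰 := by
    refine (Filter.sInter_mem hffin).2 ?_
    intro b hb
    have hUb : uZar 𝒰 ∈ b := Set.mem_sInter.1 hUB b hb
    rcases hfsub hb with ⟨x, rfl⟩ | ⟨y, rfl⟩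
    · exact (uRing_mem 𝒰 x).1 hUb
    · have hy : {V : Zar F | y ∈ V.1} ∉ 𝒰 := fun h => hUb ((uRing_mem 𝒰 y).2 h)
      exact (Ultrafilter.compl_mem_iff_notMem (s := {V : Zar F | y ∈ V.1})).2 hy
  have hZ𝒰 : Z ∈ 𝒰 := (le_trans h𝒰 inf_le_right) (Filter.mem_principal_self Z)
  have hc𝒰 : ({uZar 𝒰} : Set (Zar F))ᶜ ∈ 𝒰 := by
    apply le_trans h𝒰 inf_le_left
    rw [Filter.mem_cofinite, compl_compl]
    exact Set.finite_singleton _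
  obtain ⟨W, hWZ, hWc, hWB⟩ :=
    Ultrafilter.nonempty_of_mem (Filter.inter_mem hZ𝒰 (Filter.inter_mem hc𝒰 hB𝒰))
  exact ⟨W, hWZ, fun h => hWc (by simp [h]), hBN hWB⟩


theorem stmt2 (X : Set (Zar F)) (hX : X.Infinite) :
    (⋃ Y ∈ {Y : Set (Zar F) | Y ⊆ X ∧ (X \ Y).Finite}, jSet Y) = jSet (limPts X) := by
  apply Set.Subset.antisymm
  · intro a ha
    simp only [Set.mem_iUnion, Set.mem_setOf_eq, exists_prop] at ha
    obtain ⟨Y, ⟨hYX, hfin⟩, haY⟩ := ha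
    have haY' : ∀ W ∈ Y, a ∈ mIdeal W := fun W hW => Set.mem_iInter₂.1 haY W hW
    rw [jSet, Set.mem_iInter₂]
    intro U hU
    by_cases ha0 : a = 0
    · exact ⟨ha0 ▸ zero_mem U.1, Or.inl ha0⟩
    constructor
    · by_contra haU
      obtain ⟨W, hWY, hWN⟩ := limPts_meets hYX hfin hU (zar_isOpen_notMem a) haU
      exact hWN (haY' W hWY).1
    · refine Or.inr fun hinv => ?_
      obtain ⟨W, hWY, hWN⟩ := limPts_meets hYX hfin hU (zar_isOpen_mem a⁻¹) hinv
      rcases (haY' W hWY).2 with h0 | h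
      · exact ha0 h0
      · exact h hWN
  · intro a ha
    have ha' : ∀ U ∈ limPts X, a ∈ mIdeal U := fun U hU => Set.mem_iInter₂.1 ha U hU
    simp only [Set.mem_iUnion, Set.mem_setOf_eq, exists_prop]
    by_cases ha0 : a = 0
    · refine ⟨X, ⟨subset_rfl, by simp⟩, ?_⟩
      rw [jSet, Set.mem_iInter₂]
      intro V _
      exact ⟨ha0 ▸ zero_mem V.1, Or.inl ha0⟩
    · set Z : Set (Zar F) := {V ∈ X | a ∉ mIdeal V} with hZdef
      have hZX : Z ⊆ X := fun V hV => hV.1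
      have hZfin : Z.Finite := by
        by_contra hinf
        have hinf' : Z.Infinite := hinf
        have hne : (Filter.cofinite ⊓ Filter.principal Z).NeBot :=
          hinf'.cofinite_inf_principal_neBot
        set 𝒰 := Ultrafilter.of (Filter.cofinite ⊓ Filter.principal Z) with h𝒰def
        have hle := Ultrafilter.of_le (Filter.cofinite ⊓ Filter.principal Z)
        have hlim : uZar 𝒰 ∈ limPts Z := uZar_limPts 𝒰 hle
        have hlimX : uZar 𝒰 ∈ limPts X := by
          intro N hN hUN
          obtain ⟨W, hWZ, h1, h2⟩ := hlim N hN hUN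
          exact ⟨W, hZX hWZ, h1, h2⟩
        have hm : a ∈ mIdeal (uZar 𝒰) := ha' _ hlimX
        have hmem : {V : Zar F | a ∈ V.1} ∈ 𝒰 := (uRing_mem 𝒰 a).1 hm.1
        have hninv : {V : Zar F | a⁻¹ ∈ V.1} ∉ 𝒰 := by
          rcases hm.2 with h0 | h
          · exact absurd h0 ha0
          · exact fun hh => h ((uRing_mem 𝒰 a⁻¹).2 hh)
        have hcinv : ({V : Zar F | a⁻¹ ∈ V.1})ᶜ ∈ 𝒰 :=
          Ultrafilter.compl_mem_iff_notMem.2 hninv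
        have hZ𝒰 : Z ∈ 𝒰 :=
          (le_trans hle inf_le_right) (Filter.mem_principal_self Z)
        obtain ⟨W, hWZ, hWa, hWinv⟩ :=
          Ultrafilter.nonempty_of_mem
            (Filter.inter_mem hZ𝒰 (Filter.inter_mem hmem hcinv))
        exact hWZ.2 ⟨hWa, Or.inr hWinv⟩
      refine ⟨X \ Z, ⟨Set.diff_subset, ?_⟩, ?_⟩
      · rw [Set.diff_diff_cancel_left hZX]
        exact hZfin
      · rw [jSet, Set.mem_iInter₂]
        intro V hV
        by_contra hmV
        exact hV.2 ⟨hV.1, hmV⟩
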